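/- Let Γ : ℂᴺ → (N×N Hermitian matrices) satisfy C₊·δ²·|z|⁴ ≤ 2·z*Γ(z)z ≤ C₋·δ²·|z|⁴ for all z, with constants 0 < C₊ ≤ C₋ and δ > 0. Suppose z : [0,∞) → ℂᴺ is differentiable, z(0) = z₀ ≠ 0, and d/dt|z(t)|² = -2·z(t)*Γ(z(t))z(t) + r(t) with |r(t)| ≤ ε·δ²·|z(t)|⁴ for some 0 ≤ ε < C₊. Then for all t ≥ 0, (|z₀|⁻² + (C₋+ε)δ²t)^{-1/2} ≤ |z(t)| ≤ (|z₀|⁻² + (C₊-ε)δ²t)^{-1/2}; in particular z(t) ≠ 0 for all t. -/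

import Mathlib

open Matrix Set

private lemma riccati_upper_pert {f f' : ℝ → ℝ} {K K' v0 t : ℝ}
    (hK' : 0 < K') (hKK : K' < K) (hv0 : 0 < v0) (ht : 0 ≤ t)
    (hf' : ∀ s ∈ Set.Ici (0:ℝ), HasDerivWithinAt f (f' s) (Set.Ici 0) s)
    (h0 : f 0 ≤ v0⁻¹)
    (hb : ∀ s ∈ Set.Ici (0:ℝ), f' s ≤ -K * f s ^ 2) :
    f t ≤ (v0 + K' * t)⁻¹ := by
  have hpos : ∀ s : ℝ, 0 ≤ s → 0 < v0 + K' * s := fun s hs => by positivity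
  have hB : ∀ x : ℝ, 0 ≤ x →
      HasDerivWithinAt (fun s => (v0 + K' * s)⁻¹) (-K' / (v0 + K' * x) ^ 2) (Set.Ici x) x := by
    intro x hx
    have h1 : HasDerivAt (fun s : ℝ => v0 + K' * s) K' x := by
      simpa using (hasDerivAt_id x).const_mul K' |>.const_add v0
    exact (h1.inv (hpos x hx).ne').hasDerivWithinAt
  have hcont : ContinuousOn f (Set.Icc 0 t) := fun x hx =>
    ((hf' x hx.1).continuousWithinAt).mono (fun y hy => hy.1)
  have := image_le_of_deriv_right_lt_deriv_boundary' (a := 0) (b := t)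
    (f := f) (f' := f') hcont
    (fun x hx => (hf' x hx.1).mono (Set.Ici_subset_Ici.2 hx.1))
    (B := fun s => (v0 + K' * s)⁻¹) (B' := fun s => -K' / (v0 + K' * s) ^ 2)
    (by simpa using h0)
    (((continuous_const.add (continuous_const.mul continuous_id)).continuousOn).inv₀
      (fun x hx => (hpos x hx.1).ne'))
    (fun x hx => hB x hx.1)
    ?_ (Set.right_mem_Icc.2 ht)
  · exact this
  · intro x hx heq
    have hx0 := hx.1
    have hBpos := hpos x hx0
    calc f' x ≤ -K * f x ^ 2 := hb x hx0
      _ = -K * ((v0 + K' * x)⁻¹) ^ 2 := by rw [heq]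
      _ < -K' * ((v0 + K' * x)⁻¹) ^ 2 := by
          have : (0:ℝ) < ((v0 + K' * x)⁻¹) ^ 2 := by positivity
          exact mul_lt_mul_of_pos_right (by linarith) this
      _ = -K' / (v0 + K' * x) ^ 2 := by field_simp

private lemma riccati_lower_pert {f f' : ℝ → ℝ} {K K' v0 t : ℝ}
    (hK : 0 < K) (hKK : K < K') (hv0 : 0 < v0) (ht : 0 ≤ t)
    (hf' : ∀ s ∈ Set.Ici (0:ℝ), HasDerivWithinAt f (f' s) (Set.Ici 0) s)
    (h0 : v0⁻¹ ≤ f 0)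
    (hb : ∀ s ∈ Set.Ici (0:ℝ), -K * f s ^ 2 ≤ f' s) :
    (v0 + K' * t)⁻¹ ≤ f t := by
  have hpos : ∀ s : ℝ, 0 ≤ s → 0 < v0 + K' * s := fun s hs => by
    have : 0 < K' := hK.trans hKK
    positivity
  have hB : ∀ x : ℝ, 0 ≤ x →
      HasDerivWithinAt (fun s => -(v0 + K' * s)⁻¹) (K' / (v0 + K' * x) ^ 2) (Set.Ici x) x := by
    intro x hx
    have h1 : HasDerivAt (fun s : ℝ => v0 + K' * s) K' x := by
      simpa using (hasDerivAt_id x).const_mul K' |>.const_add v0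
    have := (h1.inv (hpos x hx).ne').neg
    simp only [neg_div, neg_neg] at this
    exact this.hasDerivWithinAt
  have hcont : ContinuousOn (fun s => -f s) (Set.Icc 0 t) := fun x hx =>
    (((hf' x hx.1).continuousWithinAt).mono (fun y hy => hy.1)).neg
  have key := image_le_of_deriv_right_lt_deriv_boundary' (a := 0) (b := t)
    (f := fun s => -f s) (f' := fun s => -f' s) hcont
    (fun x hx => ((hf' x hx.1).mono (Set.Ici_subset_Ici.2 hx.1)).neg)
    (B := fun s => -(v0 + K' * s)⁻¹) (B' := fun s => K' / (v0 + K' * s) ^ 2)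
    (by simpa using h0)
    ((((continuous_const.add (continuous_const.mul continuous_id)).continuousOn).inv₀
      (fun x hx => (hpos x hx.1).ne')).neg)
    (fun x hx => hB x hx.1)
    ?_ (Set.right_mem_Icc.2 ht)
  · linarith [key]
  · intro x hx heq
    have hx0 := hx.1
    have hfx : f x = (v0 + K' * x)⁻¹ := by linarith [heq]
    have h1 : -K * f x ^ 2 ≤ f' x := hb x hx0
    have hsq : (0:ℝ) < ((v0 + K' * x)⁻¹) ^ 2 := by
      have := hpos x hx0; positivity
    have h2 : -K' * ((v0 + K' * x)⁻¹) ^ 2 < -K * ((v0 + K' * x)⁻¹) ^ 2 :=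
      mul_lt_mul_of_pos_right (by linarith) hsq
    have h3 : K' / (v0 + K' * x) ^ 2 = -(-K' * ((v0 + K' * x)⁻¹) ^ 2) := by field_simp
    show -f' x < K' / (v0 + K' * x) ^ 2
    rw [h3]
    rw [hfx] at h1
    linarith

private lemma dot_star_self_re (n : ℕ) (w : Fin n → ℂ) :
    (star w ⬝ᵥ w).re = ∑ i, Complex.normSq (w i) := by
  simp [dotProduct, Complex.normSq_apply, Complex.mul_re]

private lemma dot_star_self_nonneg (n : ℕ) (w : Fin n → ℂ) : 0 ≤ (star w ⬝ᵥ w).re := by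
  rw [dot_star_self_re]
  exact Finset.sum_nonneg fun i _ => Complex.normSq_nonneg _

private lemma dot_star_self_pos (n : ℕ) (w : Fin n → ℂ) (hw : w ≠ 0) :
    0 < (star w ⬝ᵥ w).re := by
  rw [dot_star_self_re]
  obtain ⟨i, hi⟩ := Function.ne_iff.1 hw
  have h1 : 0 < Complex.normSq (w i) := by
    simpa [Complex.normSq_pos] using hi
  exact h1.trans_le (Finset.single_le_sum (fun j _ => Complex.normSq_nonneg (w j))
    (Finset.mem_univ i))

theorem stmt_19 {N : ℕ} (Γ : (Fin N → ℂ) → Matrix (Fin N) (Fin N) ℂ)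
    (hHerm : ∀ z, (Γ z).IsHermitian)
    (Cplus Cminus δ ε : ℝ) (hCp : 0 < Cplus) (hCpm : Cplus ≤ Cminus)
    (hδ : 0 < δ) (hε0 : 0 ≤ ε) (hε : ε < Cplus)
    (hΓbound : ∀ w : Fin N → ℂ,
      Cplus * δ ^ 2 * ((star w ⬝ᵥ w).re) ^ 2 ≤ 2 * (star w ⬝ᵥ (Γ w).mulVec w).re ∧
      2 * (star w ⬝ᵥ (Γ w).mulVec w).re ≤ Cminus * δ ^ 2 * ((star w ⬝ᵥ w).re) ^ 2)
    (z : ℝ → Fin N → ℂ) (z₀ : Fin N → ℂ) (hz0 : z 0 = z₀) (hz₀ne : z₀ ≠ 0)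
    (r : ℝ → ℝ)
    (hderiv : ∀ t, 0 ≤ t →
      HasDerivWithinAt (fun s => (star (z s) ⬝ᵥ z s).re)
        (-2 * (star (z t) ⬝ᵥ (Γ (z t)).mulVec (z t)).re + r t) (Set.Ici 0) t)
    (hr : ∀ t, 0 ≤ t → |r t| ≤ ε * δ ^ 2 * ((star (z t) ⬝ᵥ z t).re) ^ 2) :
    ∀ t, 0 ≤ t →
      (((star z₀ ⬝ᵥ z₀).re⁻¹ + (Cminus + ε) * δ ^ 2 * t) ^ (-(1/2) : ℝ)
          ≤ Real.sqrt ((star (z t) ⬝ᵥ z t).re) ∧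
        Real.sqrt ((star (z t) ⬝ᵥ z t).re)
          ≤ ((star z₀ ⬝ᵥ z₀).re⁻¹ + (Cplus - ε) * δ ^ 2 * t) ^ (-(1/2) : ℝ)) ∧
      z t ≠ 0 := by
  set u : ℝ → ℝ := fun s => (star (z s) ⬝ᵥ z s).re with hu
  set g : ℝ → ℝ := fun s => -2 * (star (z s) ⬝ᵥ (Γ (z s)).mulVec (z s)).re + r s with hg
  have hu0pos : 0 < (star z₀ ⬝ᵥ z₀).re := dot_star_self_pos N z₀ hz₀ne
  set v0 : ℝ := (star z₀ ⬝ᵥ z₀).re⁻¹ with hv0def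
  have hv0 : 0 < v0 := inv_pos.2 hu0pos
  have hv0inv : v0⁻¹ = u 0 := by simp [hv0def, hu, hz0]
  set Kp : ℝ := (Cplus - ε) * δ ^ 2 with hKpdef
  set Km : ℝ := (Cminus + ε) * δ ^ 2 with hKmdef
  have hKp : 0 < Kp := by apply mul_pos (by linarith) (by positivity)
  have hKm : 0 < Km := by
    apply mul_pos (by linarith) (by positivity)
  have hf' : ∀ s ∈ Set.Ici (0:ℝ), HasDerivWithinAt u (g s) (Set.Ici 0) s := fun s hs =>
    hderiv s hs
  have hbu : ∀ s ∈ Set.Ici (0:ℝ), g s ≤ -Kp * u s ^ 2 := by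
    intro s hs
    have h1 := (hΓbound (z s)).1
    have h2 := (abs_le.1 (hr s hs)).2
    have : -Kp * u s ^ 2 = -(Cplus * δ ^ 2 * u s ^ 2) + ε * δ ^ 2 * u s ^ 2 := by
      rw [hKpdef]; ring
    rw [this, hg]
    dsimp only
    linarith
  have hbl : ∀ s ∈ Set.Ici (0:ℝ), -Km * u s ^ 2 ≤ g s := by
    intro s hs
    have h1 := (hΓbound (z s)).2
    have h2 := (abs_le.1 (hr s hs)).1
    have : -Km * u s ^ 2 = -(Cminus * δ ^ 2 * u s ^ 2) + -(ε * δ ^ 2 * u s ^ 2) := by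
      rw [hKmdef]; ring
    rw [this, hg]
    dsimp only
    linarith
  intro t ht
  -- upper bound on u t
  have hBpos : 0 < v0 + Kp * t := by positivity
  have hApos : 0 < v0 + Km * t := by positivity
  have hupper : u t ≤ (v0 + Kp * t)⁻¹ := by
    refine ge_of_tendsto (x := nhdsWithin Kp (Set.Iio Kp))
      (f := fun K' => (v0 + K' * t)⁻¹) ?_ ?_
    · exact (((continuousAt_const.add (continuousAt_id.mul continuousAt_const)).inv₀
        hBpos.ne').tendsto).mono_left nhdsWithin_le_nhds
    · filter_upwards [Ioo_mem_nhdsLT_of_mem (Set.right_mem_Ioc.2 hKp)] with K' hK'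
      exact riccati_upper_pert hK'.1 hK'.2 hv0 ht hf' hv0inv.ge hbu
  have hlower : (v0 + Km * t)⁻¹ ≤ u t := by
    refine le_of_tendsto (x := nhdsWithin Km (Set.Ioi Km))
      (f := fun K' => (v0 + K' * t)⁻¹) ?_ ?_
    · exact (((continuousAt_const.add (continuousAt_id.mul continuousAt_const)).inv₀
        hApos.ne').tendsto).mono_left nhdsWithin_le_nhds
    · filter_upwards [self_mem_nhdsWithin] with K' hK'
      exact riccati_lower_pert hKm hK' hv0 ht hf' hv0inv.le hbl
  have hutpos : 0 < u t := lt_of_lt_of_le (inv_pos.2 hApos) hlower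
  have hztne : z t ≠ 0 := by
    intro h
    rw [hu] at hutpos
    simp only [h] at hutpos
    simp at hutpos
  have hrpow : ∀ x : ℝ, 0 ≤ x → x ^ (-(1/2) : ℝ) = Real.sqrt x⁻¹ := fun x hx => by
    rw [Real.sqrt_inv, Real.sqrt_eq_rpow, ← Real.rpow_neg hx]
  refine ⟨⟨?_, ?_⟩, hztne⟩
  · rw [hrpow _ hApos.le]
    exact Real.sqrt_le_sqrt hlower
  · rw [hrpow _ hBpos.le]
    exact Real.sqrt_le_sqrt hupper
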